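/- Let T_A, T_B be strongly continuous one-parameter groups on real Banach spaces X, Y, with T_A admitting a dichotomy projection P₊ with constants k ≥ 1, α > 0 and associated Green kernel G_A. Let f : X × Y → X be bounded and Lipschitz with constant L, with 4kα⁻¹L < 1. For (ξ,η) ∈ X × Y let (U₁(·;ξ,η), U₂(·;ξ,η)) denote the unique mild solution of the semilinear system with initial value (ξ,η), and define h(ξ,η) := −∫_ℝ G_A(−s) f(U₁(s;ξ,η), U₂(s;ξ,η)) ds. Then for every mild solution (u₁,u₂) of the semilinear system, the pair (t ↦ u₁(t) + h(u₁(t),u₂(t)), t ↦ u₂(t)) is a mild solution of the linear system; that is, u₁(t) + h(u₁(t),u₂(t)) = T_A(t)(u₁(0) + h(u₁(0),u₂(0))) and u₂(t) = T_B(t)u₂(0) for all t ∈ ℝ. -/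

import Mathlib

open MeasureTheory Set
set_option linter.unusedSectionVars false
set_option linter.unusedVariables false
set_option maxHeartbeats 1000000

noncomputable section

/-- A strongly continuous one-parameter group on a real Banach space. -/
def IsC0Group {X : Type*} [NormedAddCommGroup X] [NormedSpace ℝ X]
    (T : ℝ → X →L[ℝ] X) : Prop :=
  T 0 = ContinuousLinearMap.id ℝ X ∧
  (∀ t s : ℝ, T (t + s) = (T t).comp (T s)) ∧
  (∀ x : X, Continuous fun t => T t x)

/-- `P` is a dichotomy projection for the group `T` with constants `k ≥ 1`, `α > 0`. -/
def IsDichotomyProjection {X : Type*} [NormedAddCommGroup X] [NormedSpace ℝ X]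
    (T : ℝ → X →L[ℝ] X) (P : X →L[ℝ] X) (k α : ℝ) : Prop :=
  P.comp P = P ∧
  (∀ t : ℝ, P.comp (T t) = (T t).comp P) ∧
  (∀ x : X, ∀ t : ℝ, 0 ≤ t → ‖T t (P x)‖ ≤ k * Real.exp (-α * t) * ‖P x‖) ∧
  (∀ x : X, ∀ t : ℝ, t ≤ 0 → ‖T t (x - P x)‖ ≤ k * Real.exp (α * t) * ‖x - P x‖)

/-- The Green kernel associated to the dichotomy: `G_A(t) = T(t)P₊` for `t ≥ 0`,
`G_A(t) = −T(t)P₋` for `t < 0`. -/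
def greenKernel {X : Type*} [NormedAddCommGroup X] [NormedSpace ℝ X]
    (T : ℝ → X →L[ℝ] X) (P : X →L[ℝ] X) (t : ℝ) : X →L[ℝ] X :=
  if 0 ≤ t then (T t).comp P else -((T t).comp (ContinuousLinearMap.id ℝ X - P))

/-- Mild solution of the semilinear system `∂ₜu₁ = Au₁ + f(u₁,u₂)`, `∂ₜu₂ = Bu₂`. -/
def IsMildSolution {X Y : Type*} [NormedAddCommGroup X] [NormedSpace ℝ X]
    [NormedAddCommGroup Y] [NormedSpace ℝ Y]
    (TA : ℝ → X →L[ℝ] X) (TB : ℝ → Y →L[ℝ] Y)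
    (f : X → Y → X) (u₁ : ℝ → X) (u₂ : ℝ → Y) : Prop :=
  Continuous u₁ ∧ Continuous u₂ ∧
  (∀ t : ℝ, u₁ t = TA t (u₁ 0) + ∫ s in (0:ℝ)..t, TA (t - s) (f (u₁ s) (u₂ s))) ∧
  (∀ t : ℝ, u₂ t = TB t (u₂ 0))

/-- Mild solution of the linear system `∂ₜv₁ = Av₁`, `∂ₜv₂ = Bv₂`. -/
def IsLinearMildSolution {X Y : Type*} [NormedAddCommGroup X] [NormedSpace ℝ X]
    [NormedAddCommGroup Y] [NormedSpace ℝ Y]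
    (TA : ℝ → X →L[ℝ] X) (TB : ℝ → Y →L[ℝ] Y)
    (v₁ : ℝ → X) (v₂ : ℝ → Y) : Prop :=
  Continuous v₁ ∧ Continuous v₂ ∧
  (∀ t : ℝ, v₁ t = TA t (v₁ 0)) ∧ (∀ t : ℝ, v₂ t = TB t (v₂ 0))

variable {X Y : Type*} [NormedAddCommGroup X] [NormedSpace ℝ X] [CompleteSpace X]
  [NormedAddCommGroup Y] [NormedSpace ℝ Y] [CompleteSpace Y]

omit [CompleteSpace X] in

lemma C0_grp {T : ℝ → X →L[ℝ] X} (hT : IsC0Group T) (a b : ℝ) (x : X) :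
    T a (T b x) = T (a + b) x := by
  rw [hT.2.1 a b]; rfl

lemma C0_bound {T : ℝ → X →L[ℝ] X} (hT : IsC0Group T) (a b : ℝ) :
    ∃ C, 0 ≤ C ∧ ∀ t ∈ Icc a b, ‖T t‖ ≤ C := by
  have hpt : ∀ x : X, ∃ C, ∀ i : Icc a b, ‖T (i : ℝ) x‖ ≤ C := by
    intro x
    rcases (isCompact_Icc (a := a) (b := b)).bddAbove_image
        (((hT.2.2 x).norm).continuousOn) with ⟨C, hC⟩
    exact ⟨C, fun i => hC (mem_image_of_mem _ i.2)⟩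
  obtain ⟨C, hC⟩ := banach_steinhaus (g := fun i : Icc a b => T (i : ℝ)) hpt
  exact ⟨max C 0, le_max_right _ _, fun t ht => le_trans (hC ⟨t, ht⟩) (le_max_left _ _)⟩

lemma C0_jointCont {T : ℝ → X →L[ℝ] X} (hT : IsC0Group T) :
    Continuous fun p : ℝ × X => T p.1 p.2 := by
  rw [continuous_iff_continuousAt]
  rintro ⟨t₀, x₀⟩
  obtain ⟨C, hC0, hC⟩ := C0_bound hT (t₀ - 1) (t₀ + 1)
  rw [ContinuousAt, tendsto_iff_norm_sub_tendsto_zero]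
  have hb : Filter.Tendsto (fun p : ℝ × X => C * ‖p.2 - x₀‖ + ‖T p.1 x₀ - T t₀ x₀‖)
      (nhds (t₀, x₀)) (nhds 0) := by
    have hc : Continuous fun p : ℝ × X => C * ‖p.2 - x₀‖ + ‖T p.1 x₀ - T t₀ x₀‖ :=
      (continuous_const.mul ((continuous_snd.sub continuous_const).norm)).add
        ((((hT.2.2 x₀).comp continuous_fst).sub continuous_const).norm)
    have := hc.tendsto (t₀, x₀)
    simpa using this
  apply squeeze_zero' ?_ ?_ hb
  · exact Filter.Eventually.of_forall fun p => norm_nonneg _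
  · have hev : ∀ᶠ p : ℝ × X in nhds (t₀, x₀), p.1 ∈ Icc (t₀ - 1) (t₀ + 1) := by
      have : Icc (t₀ - 1) (t₀ + 1) ∈ nhds t₀ := Icc_mem_nhds (by linarith) (by linarith)
      exact continuous_fst.continuousAt.preimage_mem_nhds this
    filter_upwards [hev] with p hp
    calc ‖T p.1 p.2 - T t₀ x₀‖
        = ‖T p.1 (p.2 - x₀) + (T p.1 x₀ - T t₀ x₀)‖ := by rw [map_sub]; congr 1; abel
      _ ≤ ‖T p.1 (p.2 - x₀)‖ + ‖T p.1 x₀ - T t₀ x₀‖ := norm_add_le _ _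
      _ ≤ C * ‖p.2 - x₀‖ + ‖T p.1 x₀ - T t₀ x₀‖ := by
          gcongr
          exact le_trans ((T p.1).le_opNorm _) (by gcongr; exact hC _ hp)

omit [CompleteSpace X] [CompleteSpace Y] in

lemma lipschitz_cont {f : X → Y → X} {L : ℝ}
    (hfL : ∀ (x x' : X) (y y' : Y), ‖f x y - f x' y'‖ ≤ L * (‖x - x'‖ + ‖y - y'‖)) :
    Continuous fun p : X × Y => f p.1 p.2 := by
  rw [continuous_iff_continuousAt]
  rintro ⟨x₀, y₀⟩
  rw [ContinuousAt, tendsto_iff_norm_sub_tendsto_zero]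
  have hc : Continuous fun p : X × Y => L * (‖p.1 - x₀‖ + ‖p.2 - y₀‖) :=
    continuous_const.mul (((continuous_fst.sub continuous_const).norm).add
      ((continuous_snd.sub continuous_const).norm))
  have h := squeeze_zero (f := fun p : X × Y => ‖f p.1 p.2 - f x₀ y₀‖)
    (fun p => norm_nonneg _) (fun p => hfL p.1 x₀ p.2 y₀)
    (by simpa using hc.tendsto (x₀, y₀))
  simpa using h

/-- Uniqueness on `[0,∞)` for the abstract mild equation, via Grönwall. -/

lemma uniq_forward {T : ℝ → X →L[ℝ] X} (hT : IsC0Group T)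
    {g : ℝ → X → X} {L : ℝ}
    (hgL : ∀ (s : ℝ) (x x' : X), ‖g s x - g s x'‖ ≤ L * ‖x - x'‖)
    (hgc : Continuous fun p : ℝ × X => g p.1 p.2)
    {u w : ℝ → X} (hu : Continuous u) (hw : Continuous w)
    (hequ : ∀ t : ℝ, u t = T t (u 0) + ∫ s in (0:ℝ)..t, T (t - s) (g s (u s)))
    (heqw : ∀ t : ℝ, w t = T t (w 0) + ∫ s in (0:ℝ)..t, T (t - s) (g s (w s)))
    (h0 : u 0 = w 0) : ∀ t : ℝ, 0 ≤ t → u t = w t := by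
  intro b hb
  obtain ⟨C, hC0, hC⟩ := C0_bound hT 0 b
  set K := C * max L 0 with hK
  have hK0 : 0 ≤ K := mul_nonneg hC0 (le_max_right _ _)
  set d : ℝ → ℝ := fun s => ‖u s - w s‖ with hd
  have hdc : Continuous d := (hu.sub hw).norm
  have hgu : Continuous fun s => g s (u s) := hgc.comp (continuous_id.prodMk hu)
  have hgw : Continuous fun s => g s (w s) := hgc.comp (continuous_id.prodMk hw)
  -- key pointwise estimate
  have key : ∀ r ∈ Icc (0:ℝ) b, d r ≤ K * ∫ s in (0:ℝ)..r, d s := by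
    intro r hr
    have hint_u : IntervalIntegrable (fun s => T (r - s) (g s (u s))) volume 0 r :=
      ((C0_jointCont hT).comp ((continuous_const.sub continuous_id).prodMk hgu)).intervalIntegrable _ _
    have hint_w : IntervalIntegrable (fun s => T (r - s) (g s (w s))) volume 0 r :=
      ((C0_jointCont hT).comp ((continuous_const.sub continuous_id).prodMk hgw)).intervalIntegrable _ _
    have heq : u r - w r = ∫ s in (0:ℝ)..r, (T (r - s) (g s (u s)) - T (r - s) (g s (w s))) := by
      rw [intervalIntegral.integral_sub hint_u hint_w, hequ r, heqw r, h0]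
      abel
    have hbound : ∀ s ∈ Icc (0:ℝ) r, ‖T (r - s) (g s (u s)) - T (r - s) (g s (w s))‖ ≤ K * d s := by
      intro s hs
      rw [← map_sub]
      calc ‖T (r - s) (g s (u s) - g s (w s))‖
          ≤ ‖T (r - s)‖ * ‖g s (u s) - g s (w s)‖ := (T (r - s)).le_opNorm _
        _ ≤ C * (max L 0 * d s) := by
            apply mul_le_mul
            · exact hC _ ⟨by linarith [hs.2], by linarith [hs.1, hr.2]⟩
            · exact le_trans (hgL s (u s) (w s))
                (mul_le_mul_of_nonneg_right (le_max_left _ _) (norm_nonneg _))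
            · exact norm_nonneg _
            · exact hC0
        _ = K * d s := by rw [hK]; ring
    calc d r = ‖∫ s in (0:ℝ)..r, (T (r - s) (g s (u s)) - T (r - s) (g s (w s)))‖ := by
          rw [hd]; simp only [← heq]
      _ ≤ ∫ s in (0:ℝ)..r, ‖T (r - s) (g s (u s)) - T (r - s) (g s (w s))‖ :=
          intervalIntegral.norm_integral_le_integral_norm hr.1
      _ ≤ ∫ s in (0:ℝ)..r, K * d s := by
          apply intervalIntegral.integral_mono_on hr.1
          · exact ((hint_u.sub hint_w).norm)
          · exact (continuous_const.mul hdc).intervalIntegrable _ _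
          · exact hbound
      _ = K * ∫ s in (0:ℝ)..r, d s := by rw [intervalIntegral.integral_const_mul]
  -- Grönwall for the primitive
  set W : ℝ → ℝ := fun r => ∫ s in (0:ℝ)..r, d s with hW
  have hW' : ∀ r : ℝ, HasDerivAt W (d r) r := fun r =>
    intervalIntegral.integral_hasDerivAt_right (hdc.intervalIntegrable _ _)
      ⟨univ, Filter.univ_mem, hdc.aestronglyMeasurable.restrict⟩ hdc.continuousAt
  have hWc : Continuous W := by
    apply continuous_iff_continuousAt.2 fun r => (hW' r).continuousAt
  have hWnonneg : ∀ r ∈ Icc (0:ℝ) b, 0 ≤ W r := fun r hr =>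
    intervalIntegral.integral_nonneg hr.1 (fun s _ => norm_nonneg _)
  have hgron := norm_le_gronwallBound_of_norm_deriv_right_le (f := W) (f' := d)
    (δ := 0) (K := K) (ε := 0) (a := 0) (b := b) hWc.continuousOn
    (fun r _ => (hW' r).hasDerivWithinAt) (by simp [hW]) ?_
  · have hWb : W b = 0 := by
      have := hgron b ⟨hb, le_refl b⟩
      rw [gronwallBound_ε0, zero_mul] at this
      exact norm_eq_zero.1 (le_antisymm this (norm_nonneg _))
    have h2 : d b ≤ K * W b := key b ⟨hb, le_refl b⟩
    rw [hWb, mul_zero] at h2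
    have h3 : d b = 0 := le_antisymm h2 (norm_nonneg _)
    exact sub_eq_zero.1 (norm_eq_zero.1 h3)
  · intro r hr
    have h1 := key r ⟨hr.1, le_of_lt hr.2⟩
    rw [Real.norm_eq_abs, Real.norm_eq_abs, abs_of_nonneg (norm_nonneg _),
      abs_of_nonneg (hWnonneg r ⟨hr.1, le_of_lt hr.2⟩), add_zero]
    exact h1

/-- Uniqueness on all of `ℝ`, via reflection. -/

lemma uniq_full {T : ℝ → X →L[ℝ] X} (hT : IsC0Group T)
    {g : ℝ → X → X} {L : ℝ}
    (hgL : ∀ (s : ℝ) (x x' : X), ‖g s x - g s x'‖ ≤ L * ‖x - x'‖)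
    (hgc : Continuous fun p : ℝ × X => g p.1 p.2)
    {u w : ℝ → X} (hu : Continuous u) (hw : Continuous w)
    (hequ : ∀ t : ℝ, u t = T t (u 0) + ∫ s in (0:ℝ)..t, T (t - s) (g s (u s)))
    (heqw : ∀ t : ℝ, w t = T t (w 0) + ∫ s in (0:ℝ)..t, T (t - s) (g s (w s)))
    (h0 : u 0 = w 0) : ∀ t : ℝ, u t = w t := by
  intro t
  rcases le_or_gt 0 t with ht | ht
  · exact uniq_forward hT hgL hgc hu hw hequ heqw h0 t ht
  · -- reflect
    set T' : ℝ → X →L[ℝ] X := fun s => T (-s) with hT'def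
    have hT' : IsC0Group T' := by
      refine ⟨by rw [hT'def]; simp only [neg_zero]; exact hT.1, fun a b => ?_,
        fun x => (hT.2.2 x).comp continuous_neg⟩
      rw [hT'def]; simp only [neg_add]; exact hT.2.1 _ _
    set g' : ℝ → X → X := fun s x => -(g (-s) x) with hg'def
    have hg'L : ∀ (s : ℝ) (x x' : X), ‖g' s x - g' s x'‖ ≤ L * ‖x - x'‖ := by
      intro s x x'
      have e : g' s x - g' s x' = g (-s) x' - g (-s) x := by rw [hg'def]; exact neg_sub_neg _ _
      calc ‖g' s x - g' s x'‖ = ‖g (-s) x' - g (-s) x‖ := by rw [e]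
        _ ≤ L * ‖x' - x‖ := hgL _ _ _
        _ = L * ‖x - x'‖ := by rw [norm_sub_rev]
    have hg'c : Continuous fun p : ℝ × X => g' p.1 p.2 :=
      (hgc.comp ((continuous_fst.neg).prodMk continuous_snd)).neg
    have refl_eq : ∀ (v : ℝ → X), Continuous v →
        (∀ t : ℝ, v t = T t (v 0) + ∫ s in (0:ℝ)..t, T (t - s) (g s (v s))) →
        ∀ t : ℝ, v (-t) = T' t (v (-0)) +
          ∫ s in (0:ℝ)..t, T' (t - s) (g' s (v (-s))) := by
      intro v hv hveq t
      have key : ∫ s in (0:ℝ)..t, T' (t - s) (g' s (v (-s)))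
          = ∫ x in (0:ℝ)..(-t), T (-t - x) (g x (v x)) := by
        have hcn := intervalIntegral.integral_comp_neg (a := (0:ℝ)) (b := t)
          (f := fun x => T (-t - x) (g x (v x)))
        have h1 : ∀ s : ℝ, T' (t - s) (g' s (v (-s))) = -(T (-t - -s) (g (-s) (v (-s)))) := by
          intro s
          rw [hT'def, hg'def]
          simp only [map_neg]
          congr 2
          ring
        rw [intervalIntegral.integral_congr (g := fun s => -(T (-t - -s) (g (-s) (v (-s)))))
          (fun s _ => h1 s)]
        rw [intervalIntegral.integral_neg, hcn, neg_zero,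
          intervalIntegral.integral_symm, neg_neg]
      rw [key, neg_zero, hT'def]
      exact hveq (-t)
    have hu' : ∀ s : ℝ, u (-s) = w (-s) → True := fun _ _ => trivial
    have := uniq_forward hT' hg'L hg'c (hu.comp continuous_neg) (hw.comp continuous_neg)
      (fun s => by simpa using refl_eq u hu hequ s)
      (fun s => by simpa using refl_eq w hw heqw s)
      (by simpa using h0) (-t) (by linarith)
    simpa using this

/-- Time-shift of a mild solution satisfies the shifted integral equation. -/

lemma shift_eq {TA : ℝ → X →L[ℝ] X} (hTA : IsC0Group TA)
    {F : ℝ → X} (hF : Continuous F) {u₁ : ℝ → X} (hu₁ : Continuous u₁)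
    (hequ : ∀ t : ℝ, u₁ t = TA t (u₁ 0) + ∫ s in (0:ℝ)..t, TA (t - s) (F s))
    (τ t : ℝ) :
    u₁ (τ + t) = TA t (u₁ τ) + ∫ s in (0:ℝ)..t, TA (t - s) (F (τ + s)) := by
  have hI : ∀ a b c : ℝ, IntervalIntegrable (fun s => TA (c - s) (F s)) volume a b :=
    fun a b c => ((C0_jointCont hTA).comp
      ((continuous_const.sub continuous_id).prodMk hF)).intervalIntegrable _ _
  have e1 : TA t (u₁ τ) = TA (τ + t) (u₁ 0) + ∫ s in (0:ℝ)..τ, TA (τ + t - s) (F s) := by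
    rw [hequ τ, map_add, C0_grp hTA, add_comm t τ]
    congr 1
    rw [← ContinuousLinearMap.intervalIntegral_comp_comm _ (hI 0 τ τ)]
    apply intervalIntegral.integral_congr
    intro s _
    show TA t (TA (τ - s) (F s)) = TA (τ + t - s) (F s)
    rw [C0_grp hTA]
    congr 1
    ring
  have e2 : (∫ s in (0:ℝ)..t, TA (t - s) (F (τ + s)))
      = ∫ r in τ..(τ + t), TA (τ + t - r) (F r) := by
    have h := intervalIntegral.integral_comp_add_left (a := (0:ℝ)) (b := t)
      (f := fun r => TA (τ + t - r) (F r)) τ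
    simp only [add_zero] at h
    rw [← h]
    apply intervalIntegral.integral_congr
    intro s _
    show TA (t - s) (F (τ + s)) = TA (τ + t - (τ + s)) (F (τ + s))
    congr 2
    ring
  rw [e1, e2, add_assoc,
    intervalIntegral.integral_add_adjacent_intervals (hI 0 τ (τ + t)) (hI τ (τ + t) (τ + t)),
    ← hequ (τ + t)]

omit [CompleteSpace X] in

lemma green_bound {T : ℝ → X →L[ℝ] X} {P : X →L[ℝ] X} {k α : ℝ}
    (hP : IsDichotomyProjection T P k α) (hk : 0 ≤ k) (s : ℝ) (x : X) :
    ‖greenKernel T P s x‖ ≤ k * (1 + ‖P‖) * Real.exp (-α * |s|) * ‖x‖ := by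
  unfold greenKernel
  split_ifs with hs
  · rw [abs_of_nonneg hs]
    calc ‖((T s).comp P) x‖ = ‖T s (P x)‖ := rfl
      _ ≤ k * Real.exp (-α * s) * ‖P x‖ := hP.2.2.1 x s hs
      _ ≤ k * Real.exp (-α * s) * (‖P‖ * ‖x‖) :=
          mul_le_mul_of_nonneg_left (P.le_opNorm x) (by positivity)
      _ ≤ k * (1 + ‖P‖) * Real.exp (-α * s) * ‖x‖ := by
          have h1 : ‖P‖ ≤ 1 + ‖P‖ := by linarith [norm_nonneg P]
          nlinarith [Real.exp_pos (-α * s), norm_nonneg x, norm_nonneg P,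
            mul_nonneg hk (Real.exp_pos (-α * s)).le]
  · push_neg at hs
    rw [abs_of_neg hs]
    have hle : s ≤ 0 := hs.le
    calc ‖(-((T s).comp (ContinuousLinearMap.id ℝ X - P))) x‖
        = ‖T s (x - P x)‖ := by
          rw [ContinuousLinearMap.neg_apply, norm_neg, ContinuousLinearMap.comp_apply,
            ContinuousLinearMap.sub_apply, ContinuousLinearMap.id_apply]
      _ ≤ k * Real.exp (α * s) * ‖x - P x‖ := hP.2.2.2 x s hle
      _ ≤ k * Real.exp (α * s) * ((1 + ‖P‖) * ‖x‖) := by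
          apply mul_le_mul_of_nonneg_left ?_ (by positivity)
          calc ‖x - P x‖ ≤ ‖x‖ + ‖P x‖ := norm_sub_le _ _
            _ ≤ ‖x‖ + ‖P‖ * ‖x‖ := by linarith [P.le_opNorm x]
            _ = (1 + ‖P‖) * ‖x‖ := by ring
      _ = k * (1 + ‖P‖) * Real.exp (-α * -s) * ‖x‖ := by ring_nf

lemma exp_abs_integrable {α : ℝ} (hα : 0 < α) (c : ℝ) :
    Integrable (fun r : ℝ => Real.exp (-α * |c - r|)) := by
  have base : Integrable (fun x : ℝ => Real.exp (-α * |x|)) := by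
    have h1 : IntegrableOn (fun x : ℝ => Real.exp (-α * |x|)) (Ici 0) := by
      rw [integrableOn_Ici_iff_integrableOn_Ioi]
      apply (exp_neg_integrableOn_Ioi 0 hα).congr_fun ?_ measurableSet_Ioi
      intro x hx
      simp only
      rw [abs_of_pos hx]
    have h2 : IntegrableOn (fun x : ℝ => Real.exp (-α * |x|)) (Iio 0) := by
      rw [← (Measure.measurePreserving_neg (volume : Measure ℝ)).integrableOn_comp_preimage
        (Homeomorph.neg ℝ).measurableEmbedding]
      simp only [Function.comp_def, abs_neg, neg_preimage, neg_Iio, neg_zero]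
      exact h1.mono_set Ioi_subset_Ici_self
    rw [← integrableOn_univ, ← Iio_union_Ici (a := (0:ℝ)), integrableOn_union]
    exact ⟨h2, h1⟩
  have := (integrable_comp_sub_left (μ := (volume : Measure ℝ))
    (fun x : ℝ => Real.exp (-α * |x|)) c).2 base
  exact this

lemma green_integrable {T : ℝ → X →L[ℝ] X} (hT : IsC0Group T) {P : X →L[ℝ] X} {k α : ℝ}
    (hP : IsDichotomyProjection T P k α) (hk : 0 ≤ k) (hα : 0 < α)
    {F : ℝ → X} (hF : Continuous F) {Mf : ℝ} (hFb : ∀ r : ℝ, ‖F r‖ ≤ Mf) (c : ℝ) :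
    Integrable (fun r : ℝ => greenKernel T P (c - r) (F r)) := by
  have hg₁ : Continuous fun r : ℝ => T (c - r) (P (F r)) :=
    (C0_jointCont hT).comp ((continuous_const.sub continuous_id).prodMk (P.continuous.comp hF))
  have hg₂ : Continuous fun r : ℝ => -(T (c - r) (F r - P (F r))) :=
    ((C0_jointCont hT).comp ((continuous_const.sub continuous_id).prodMk
      (hF.sub (P.continuous.comp hF)))).neg
  have hmeas : AEStronglyMeasurable (fun r : ℝ => greenKernel T P (c - r) (F r)) volume := by
    have heq : (fun r : ℝ => greenKernel T P (c - r) (F r))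
        = fun r => if r ≤ c then T (c - r) (P (F r)) else -(T (c - r) (F r - P (F r))) := by
      funext r
      by_cases hr : r ≤ c
      · rw [if_pos hr]
        unfold greenKernel
        rw [if_pos (by linarith)]
        rfl
      · rw [if_neg hr]
        unfold greenKernel
        rw [if_neg (by push_neg at hr ⊢; linarith)]
        rw [ContinuousLinearMap.neg_apply, ContinuousLinearMap.comp_apply,
          ContinuousLinearMap.sub_apply, ContinuousLinearMap.id_apply]
    rw [heq]
    exact (StronglyMeasurable.ite measurableSet_Iic hg₁.stronglyMeasurable
      hg₂.stronglyMeasurable).aestronglyMeasurable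
  have hMf : 0 ≤ Mf := le_trans (norm_nonneg _) (hFb 0)
  apply Integrable.mono' ((exp_abs_integrable hα c).const_mul (k * (1 + ‖P‖) * Mf)) hmeas
  filter_upwards with r
  calc ‖greenKernel T P (c - r) (F r)‖
      ≤ k * (1 + ‖P‖) * Real.exp (-α * |c - r|) * ‖F r‖ := green_bound hP hk _ _
    _ ≤ k * (1 + ‖P‖) * Real.exp (-α * |c - r|) * Mf :=
        mul_le_mul_of_nonneg_left (hFb r) (by positivity)
    _ = k * (1 + ‖P‖) * Mf * Real.exp (-α * |c - r|) := by ring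

omit [CompleteSpace X] in

lemma kernel_diff {T : ℝ → X →L[ℝ] X} (hT : IsC0Group T) (P : X →L[ℝ] X) (t r : ℝ) (x : X) :
    greenKernel T P (t - r) x - T t (greenKernel T P (-r) x)
      = Set.indicator (Ioc 0 t) (fun s : ℝ => T (t - s) x) r
        - Set.indicator (Ioc t 0) (fun s : ℝ => T (t - s) x) r := by
  have hsum : T (t - r) (P x) + T (t - r) (x - P x) = T (t - r) x := by
    rw [← map_add]
    congr 1
    abel
  unfold greenKernel
  by_cases h1 : 0 ≤ t - r <;> by_cases h2 : 0 ≤ -r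
  · -- r ≤ t, r ≤ 0 : zero
    rw [if_pos h1, if_pos h2,
      Set.indicator_of_notMem (by simp only [mem_Ioc, not_and]; intro h; linarith),
      Set.indicator_of_notMem (by simp only [mem_Ioc, not_and]; intro h; linarith)]
    simp only [ContinuousLinearMap.comp_apply]
    rw [C0_grp hT, show t + -r = t - r by ring, sub_self, sub_zero]
  · -- 0 < r ≤ t
    rw [if_pos h1, if_neg h2,
      Set.indicator_of_mem (by constructor <;> [linarith [not_le.1 h2]; linarith]),
      Set.indicator_of_notMem (by simp only [mem_Ioc, not_and]; intro h; linarith [not_le.1 h2])]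
    simp only [ContinuousLinearMap.comp_apply, ContinuousLinearMap.neg_apply, map_neg,
      ContinuousLinearMap.sub_apply, ContinuousLinearMap.id_apply]
    rw [C0_grp hT, show t + -r = t - r by ring, sub_neg_eq_add, hsum, sub_zero]
  · -- t < r ≤ 0
    rw [if_neg h1, if_pos h2,
      Set.indicator_of_notMem (by simp only [mem_Ioc, not_and]; intro h; linarith),
      Set.indicator_of_mem (by constructor <;> [linarith [not_le.1 h1]; linarith])]
    simp only [ContinuousLinearMap.comp_apply, ContinuousLinearMap.neg_apply,
      ContinuousLinearMap.sub_apply, ContinuousLinearMap.id_apply]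
    rw [C0_grp hT, show t + -r = t - r by ring, zero_sub]
    rw [show -(T (t - r) (x - P x)) - T (t - r) (P x)
      = -(T (t - r) (P x) + T (t - r) (x - P x)) by abel, hsum]
  · -- t < r, 0 < r : zero
    rw [if_neg h1, if_neg h2,
      Set.indicator_of_notMem (by simp only [mem_Ioc, not_and]; intro h; linarith [not_le.1 h1]),
      Set.indicator_of_notMem (by simp only [mem_Ioc, not_and]; intro h; linarith [not_le.1 h2])]
    simp only [ContinuousLinearMap.comp_apply, ContinuousLinearMap.neg_apply, map_neg,
      ContinuousLinearMap.sub_apply, ContinuousLinearMap.id_apply]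
    rw [C0_grp hT, show t + -r = t - r by ring, sub_self, sub_zero]

lemma green_integral_identity {T : ℝ → X →L[ℝ] X} (hT : IsC0Group T) {P : X →L[ℝ] X} {k α : ℝ}
    (hP : IsDichotomyProjection T P k α) (hk : 0 ≤ k) (hα : 0 < α)
    {F : ℝ → X} (hF : Continuous F) {Mf : ℝ} (hFb : ∀ r : ℝ, ‖F r‖ ≤ Mf) (t : ℝ) :
    (∫ r : ℝ, greenKernel T P (t - r) (F r)) - T t (∫ r : ℝ, greenKernel T P (-r) (F r))
      = ∫ s in (0:ℝ)..t, T (t - s) (F s) := by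
  have hΦt := green_integrable hT hP hk hα hF hFb t
  have hΦ0 : Integrable (fun r : ℝ => greenKernel T P (-r) (F r)) := by
    have := green_integrable hT hP hk hα hF hFb 0
    simpa [zero_sub] using this
  have hg : Continuous fun s : ℝ => T (t - s) (F s) :=
    (C0_jointCont hT).comp ((continuous_const.sub continuous_id).prodMk hF)
  have hind1 : Integrable (Set.indicator (Ioc 0 t) (fun s : ℝ => T (t - s) (F s))) :=
    (hg.integrableOn_Ioc).integrable_indicator measurableSet_Ioc
  have hind2 : Integrable (Set.indicator (Ioc t 0) (fun s : ℝ => T (t - s) (F s))) :=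
    (hg.integrableOn_Ioc).integrable_indicator measurableSet_Ioc
  rw [← (T t).integral_comp_comm hΦ0, ← integral_sub hΦt ((T t).integrable_comp hΦ0)]
  have hpt : ∀ r : ℝ, greenKernel T P (t - r) (F r) - T t (greenKernel T P (-r) (F r))
      = Set.indicator (Ioc 0 t) (fun s : ℝ => T (t - s) (F s)) r
        - Set.indicator (Ioc t 0) (fun s : ℝ => T (t - s) (F s)) r := by
    intro r
    rw [kernel_diff hT P t r (F r)]
    by_cases h1 : r ∈ Ioc (0:ℝ) t <;> by_cases h2 : r ∈ Ioc t (0:ℝ) <;>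
      simp [Set.indicator_of_mem, Set.indicator_of_notMem, h1, h2]
  rw [integral_congr_ae (Filter.Eventually.of_forall hpt)]
  rw [integral_sub hind1 hind2, integral_indicator measurableSet_Ioc,
    integral_indicator measurableSet_Ioc]
  rcases le_or_gt 0 t with ht | ht
  · rw [intervalIntegral.integral_of_le ht, Ioc_eq_empty (not_lt.2 ht),
      setIntegral_empty, sub_zero]
  · rw [Ioc_eq_empty (not_lt.2 ht.le), setIntegral_empty, zero_sub,
      intervalIntegral.integral_symm, intervalIntegral.integral_of_le ht.le]

/-- `H = id + (h,0)` sends mild solutions of the semilinear system to mild solutions of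
the linear system. -/
theorem H_sends_solutions_to_linear_solutions
    (TA : ℝ → X →L[ℝ] X) (TB : ℝ → Y →L[ℝ] Y)
    (hTA : IsC0Group TA) (hTB : IsC0Group TB)
    (P : X →L[ℝ] X) (k α : ℝ) (hk : 1 ≤ k) (hα : 0 < α)
    (hP : IsDichotomyProjection TA P k α)
    (f : X → Y → X) (Mf L : ℝ)
    (hfB : ∀ (x : X) (y : Y), ‖f x y‖ ≤ Mf)
    (hfL : ∀ (x x' : X) (y y' : Y), ‖f x y - f x' y'‖ ≤ L * (‖x - x'‖ + ‖y - y'‖))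
    (hsmall : 4 * k * α⁻¹ * L < 1)
    -- the family of mild solutions with prescribed initial values
    (U₁ : X → Y → ℝ → X) (U₂ : X → Y → ℝ → Y)
    (hU : ∀ (ξ : X) (η : Y), IsMildSolution TA TB f (U₁ ξ η) (U₂ ξ η) ∧
      U₁ ξ η 0 = ξ ∧ U₂ ξ η 0 = η)
    (h : X → Y → X)
    (hh : ∀ (ξ : X) (η : Y),
      h ξ η = -∫ s : ℝ, greenKernel TA P (-s) (f (U₁ ξ η s) (U₂ ξ η s))) :
    ∀ (u₁ : ℝ → X) (u₂ : ℝ → Y), IsMildSolution TA TB f u₁ u₂ →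
      (∀ t : ℝ, u₁ t + h (u₁ t) (u₂ t) = TA t (u₁ 0 + h (u₁ 0) (u₂ 0))) ∧
      (∀ t : ℝ, u₂ t = TB t (u₂ 0)) := by
  intro u₁ u₂ hu
  obtain ⟨hu₁c, hu₂c, hu₁eq, hu₂eq⟩ := hu
  refine ⟨?_, hu₂eq⟩
  have hk0 : 0 ≤ k := le_trans zero_le_one hk
  have hfc : Continuous fun p : X × Y => f p.1 p.2 := lipschitz_cont hfL
  have hFc : Continuous fun s : ℝ => f (u₁ s) (u₂ s) := hfc.comp (hu₁c.prodMk hu₂c)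
  have hFb : ∀ r : ℝ, ‖f (u₁ r) (u₂ r)‖ ≤ Mf := fun r => hfB _ _
  -- identification of the canonical solutions with shifts of `u`
  have ident : ∀ τ : ℝ, (∀ s : ℝ, U₂ (u₁ τ) (u₂ τ) s = u₂ (τ + s)) ∧
      (∀ s : ℝ, U₁ (u₁ τ) (u₂ τ) s = u₁ (τ + s)) := by
    intro τ
    obtain ⟨⟨hV₁c, hV₂c, hV₁eq, hV₂eq⟩, hV₁0, hV₂0⟩ := hU (u₁ τ) (u₂ τ)
    have h2 : ∀ s : ℝ, U₂ (u₁ τ) (u₂ τ) s = u₂ (τ + s) := by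
      intro s
      rw [hV₂eq s, hV₂0, hu₂eq τ, C0_grp hTB, ← hu₂eq (s + τ), add_comm s τ]
    refine ⟨h2, ?_⟩
    have hshift := fun t => shift_eq hTA hFc hu₁c hu₁eq τ t
    have hgL : ∀ (s : ℝ) (x x' : X), ‖f x (u₂ (τ + s)) - f x' (u₂ (τ + s))‖ ≤ L * ‖x - x'‖ := by
      intro s x x'
      simpa using hfL x x' (u₂ (τ + s)) (u₂ (τ + s))
    have hgc : Continuous fun p : ℝ × X => f p.2 (u₂ (τ + p.1)) :=
      hfc.comp (continuous_snd.prodMk (hu₂c.comp (continuous_const.add continuous_fst)))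
    have hequ : ∀ t : ℝ, U₁ (u₁ τ) (u₂ τ) t = TA t (U₁ (u₁ τ) (u₂ τ) 0) +
        ∫ s in (0:ℝ)..t, TA (t - s) (f (U₁ (u₁ τ) (u₂ τ) s) (u₂ (τ + s))) := by
      intro t
      rw [hV₁eq t]
      congr 1
      apply intervalIntegral.integral_congr
      intro s _
      show TA (t - s) (f (U₁ (u₁ τ) (u₂ τ) s) (U₂ (u₁ τ) (u₂ τ) s))
        = TA (t - s) (f (U₁ (u₁ τ) (u₂ τ) s) (u₂ (τ + s)))
      rw [h2 s]
    have heqw : ∀ t : ℝ, u₁ (τ + t) = TA t (u₁ (τ + 0)) +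
        ∫ s in (0:ℝ)..t, TA (t - s) (f (u₁ (τ + s)) (u₂ (τ + s))) := by
      intro t
      rw [add_zero]
      exact hshift t
    have h0' : U₁ (u₁ τ) (u₂ τ) 0 = u₁ (τ + 0) := by rw [hV₁0, add_zero]
    exact uniq_full (g := fun s x => f x (u₂ (τ + s))) hTA hgL hgc hV₁c
      (hu₁c.comp (continuous_const.add continuous_id)) hequ heqw h0'
  -- formula for h along the solution
  have hform : ∀ τ : ℝ, h (u₁ τ) (u₂ τ)
      = -∫ r : ℝ, greenKernel TA P (τ - r) (f (u₁ r) (u₂ r)) := by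
    intro τ
    rw [hh]
    congr 1
    have heq : (fun s : ℝ => greenKernel TA P (-s)
          (f (U₁ (u₁ τ) (u₂ τ) s) (U₂ (u₁ τ) (u₂ τ) s)))
        = fun s : ℝ => greenKernel TA P (τ - (τ + s)) (f (u₁ (τ + s)) (u₂ (τ + s))) := by
      funext s
      rw [(ident τ).2 s, (ident τ).1 s]
      congr 1
      ring
    rw [heq]
    exact integral_add_left_eq_self
      (fun r : ℝ => greenKernel TA P (τ - r) (f (u₁ r) (u₂ r))) τ
  -- conclusion
  intro t
  rw [hform t, hform 0]
  have hid := green_integral_identity hTA hP hk0 hα hFc hFb t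
  have h0int : (∫ r : ℝ, greenKernel TA P (0 - r) (f (u₁ r) (u₂ r)))
      = ∫ r : ℝ, greenKernel TA P (-r) (f (u₁ r) (u₂ r)) := by
    congr 1
    funext r
    rw [zero_sub]
  rw [h0int, map_add, map_neg]
  have hmain : u₁ t = TA t (u₁ 0) +
      ((∫ r : ℝ, greenKernel TA P (t - r) (f (u₁ r) (u₂ r)))
        - TA t (∫ r : ℝ, greenKernel TA P (-r) (f (u₁ r) (u₂ r)))) := by
    rw [hid]
    exact hu₁eq t
  rw [hmain]
  abel

end
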